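/- arXiv:1510.02900 — 2 statements merged into one kernel-verified Lean document; each statement's English description precedes it below -/
import Mathlib

section
/- Let Ỹ_m = Σ over atomic set partitions π of [m] of ∏_{β ∈ π} v_{|β|} ∈ R. Then for every n ≥ 1: Y_n = Σ_{m=1}^{n} Ỹ_m · Y_{n−m}. Equivalently, the ordinary generating functions Ỹ = Σ_{m≥1} Ỹ_m t^m and Y = Σ_{n≥0} Y_n t^n in R[[t]] satisfy Ỹ = 1 − 1/Y, i.e. Y·(1 − Ỹ) = 1. -/
open Finset MvPolynomial

/-- The polynomial ring `ℚ[v₁, v₂, …]`; the variable `X l` represents `v_l`. -/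
abbrev BellRing : Type := MvPolynomial ℕ ℚ

/-- A set partition `π` of `[m] = Finset.range m` is atomic if no subset of its blocks
forms a partition of `[k]` for some `1 ≤ k < m`. -/
def IsAtomicPartition {m : ℕ} (π : Finpartition (Finset.range m)) : Prop :=
  ¬ ∃ k : ℕ, 0 < k ∧ k < m ∧ ∃ S ⊆ π.parts, S.sup id = Finset.range k

/-- The complete Bell polynomial `Y_n = Σ_{π ⊢ [n]} ∏_{β ∈ π} v_{|β|}`. -/
noncomputable def bellY (n : ℕ) : BellRing :=
  ∑ π : Finpartition (Finset.range n), ∏ β ∈ π.parts, X β.card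

/-- The atomic Bell polynomial `Ỹ_m = Σ_{π ⊢ [m] atomic} ∏_{β ∈ π} v_{|β|}`. -/
noncomputable def atomicY (m : ℕ) : BellRing :=
  ∑ᶠ π : {π : Finpartition (Finset.range m) // IsAtomicPartition π},
    ∏ β ∈ π.val.parts, X β.card

namespace BellAux

/-- shift a finset of naturals up by `m` -/
def shUp (m : ℕ) (s : Finset ℕ) : Finset ℕ := s.image (· + m)

/-- shift a finset of naturals down by `m` -/
def shDn (m : ℕ) (s : Finset ℕ) : Finset ℕ := s.image (· - m)

lemma mem_shUp {m x : ℕ} {s : Finset ℕ} : x ∈ shUp m s ↔ ∃ y ∈ s, y + m = x := by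
  simp [shUp]

lemma mem_shDn {m x : ℕ} {s : Finset ℕ} : x ∈ shDn m s ↔ ∃ y ∈ s, y - m = x := by
  simp [shDn]

lemma shUp_shDn {m : ℕ} {s : Finset ℕ} (h : ∀ x ∈ s, m ≤ x) : shUp m (shDn m s) = s := by
  ext x
  simp only [shUp, shDn, Finset.mem_image]
  constructor
  · rintro ⟨y, ⟨z, hz, rfl⟩, rfl⟩
    have := h z hz
    have : z - m + m = z := by omega
    rwa [this]
  · intro hx
    exact ⟨x - m, ⟨x, hx, rfl⟩, by have := h x hx; omega⟩

lemma shDn_shUp {m : ℕ} {s : Finset ℕ} : shDn m (shUp m s) = s := by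
  ext x
  simp only [shUp, shDn, Finset.mem_image]
  constructor
  · rintro ⟨y, ⟨z, hz, rfl⟩, rfl⟩
    simpa using hz
  · intro hx
    exact ⟨x + m, ⟨x, hx, rfl⟩, by omega⟩

lemma card_shDn {m : ℕ} {s : Finset ℕ} (h : ∀ x ∈ s, m ≤ x) : (shDn m s).card = s.card := by
  rw [shDn]
  apply Finset.card_image_of_injOn
  intro a ha b hb hab
  have hab' : a - m = b - m := hab
  have := h a ha; have := h b hb
  omega

lemma shDn_nonempty {m : ℕ} {s : Finset ℕ} (h : s.Nonempty) : (shDn m s).Nonempty :=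
  h.image _

variable {n m : ℕ}

/-- Glue an (atomic) partition of `range m` with a shifted partition of `range (n-m)`. -/
def glue (hmn : m ≤ n) (σ : Finpartition (Finset.range m))
    (τ : Finpartition (Finset.range (n - m))) : Finpartition (Finset.range n) where
  parts := σ.parts ∪ τ.parts.image (shUp m)
  supIndep := by
    rw [Finset.supIndep_iff_pairwiseDisjoint]
    have hσ : ∀ b ∈ σ.parts, ∀ x ∈ b, x < m := by
      intro b hb x hx
      exact Finset.mem_range.1 (σ.le hb hx)
    have hτ : ∀ c ∈ τ.parts.image (shUp m), ∀ x ∈ c, m ≤ x ∧ x < n := by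
      intro c hc x hx
      obtain ⟨d, hd, rfl⟩ := Finset.mem_image.1 hc
      obtain ⟨y, hy, rfl⟩ := mem_shUp.1 hx
      have := Finset.mem_range.1 (τ.le hd hy)
      omega
    intro a ha b hb hab
    simp only [Finset.coe_union, Set.mem_union, Finset.mem_coe] at ha hb
    simp only [Function.onFun, id_eq]
    rcases ha with ha | ha <;> rcases hb with hb | hb
    · exact σ.disjoint ha hb hab
    · rw [Finset.disjoint_left]
      intro x hxa hxb
      have := hσ a ha x hxa
      have := hτ b hb x hxb
      omega
    · rw [Finset.disjoint_left]
      intro x hxa hxb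
      have := hτ a ha x hxa
      have := hσ b hb x hxb
      omega
    · obtain ⟨c, hc, rfl⟩ := Finset.mem_image.1 ha
      obtain ⟨d, hd, rfl⟩ := Finset.mem_image.1 hb
      have hcd : c ≠ d := fun h => hab (by rw [h])
      have hdisj : Disjoint c d := τ.disjoint hc hd hcd
      rw [Finset.disjoint_left]
      intro x hxa hxb
      obtain ⟨y, hy, rfl⟩ := mem_shUp.1 hxa
      obtain ⟨z, hz, hzy⟩ := mem_shUp.1 hxb
      have : z = y := by omega
      subst this
      exact (Finset.disjoint_left.1 hdisj) hy hz
  sup_parts := by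
    ext x
    simp only [Finset.mem_sup, Finset.mem_union, Finset.mem_range, id]
    constructor
    · rintro ⟨b, hb | hb, hx⟩
      · have := Finset.mem_range.1 (σ.le hb hx); omega
      · obtain ⟨d, hd, rfl⟩ := Finset.mem_image.1 hb
        obtain ⟨y, hy, rfl⟩ := mem_shUp.1 hx
        have := Finset.mem_range.1 (τ.le hd hy)
        omega
    · intro hx
      by_cases hxm : x < m
      · have : x ∈ σ.parts.sup id := by rw [σ.sup_parts]; exact Finset.mem_range.2 hxm
        obtain ⟨b, hb, hxb⟩ := Finset.mem_sup.1 this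
        exact ⟨b, Or.inl hb, hxb⟩
      · have : x - m ∈ τ.parts.sup id := by
          rw [τ.sup_parts]; exact Finset.mem_range.2 (by omega)
        obtain ⟨d, hd, hxd⟩ := Finset.mem_sup.1 this
        refine ⟨shUp m d, Or.inr (Finset.mem_image_of_mem _ hd), ?_⟩
        exact mem_shUp.2 ⟨x - m, hxd, by omega⟩
  bot_notMem := by
    rw [Finset.mem_union]
    rintro (h | h)
    · exact σ.bot_notMem h
    · obtain ⟨d, hd, hde⟩ := Finset.mem_image.1 h
      have : d.Nonempty := τ.nonempty_of_mem_parts hd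
      obtain ⟨y, hy⟩ := this
      have : y + m ∈ (⊥ : Finset ℕ) := hde ▸ mem_shUp.2 ⟨y, hy, rfl⟩
      simp at this

lemma glue_parts (hmn : m ≤ n) (σ : Finpartition (Finset.range m))
    (τ : Finpartition (Finset.range (n - m))) :
    (glue hmn σ τ).parts = σ.parts ∪ τ.parts.image (shUp m) := rfl

variable (π : Finpartition (Finset.range n))

/-- The lower parts of a partition. -/
def lowParts (m : ℕ) : Finset (Finset ℕ) := π.parts.filter (· ⊆ Finset.range m)

/-- The upper parts of a partition. -/
def highParts (m : ℕ) : Finset (Finset ℕ) := π.parts.filter (¬ · ⊆ Finset.range m)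

lemma low_sup (hS : ∃ S ⊆ π.parts, S.sup id = Finset.range m) :
    (lowParts π m).sup id = Finset.range m := by
  obtain ⟨S, hSsub, hSsup⟩ := hS
  apply le_antisymm
  · apply Finset.sup_le
    intro b hb
    exact (Finset.mem_filter.1 hb).2
  · rw [← hSsup]
    apply Finset.sup_mono
    intro b hb
    refine Finset.mem_filter.2 ⟨hSsub hb, ?_⟩
    rw [← hSsup]
    exact Finset.le_sup (f := id) hb

lemma high_disjoint (hS : ∃ S ⊆ π.parts, S.sup id = Finset.range m)
    {b : Finset ℕ} (hb : b ∈ highParts π m) : ∀ x ∈ b, m ≤ x ∧ x < n := by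
  obtain ⟨hbp, hbn⟩ := Finset.mem_filter.1 hb
  intro x hx
  constructor
  · by_contra hxm
    push_neg at hxm
    -- x ∈ range m = sup of lowParts, so x ∈ some low block c
    have hxr : x ∈ (lowParts π m).sup id := by
      rw [low_sup π hS]; exact Finset.mem_range.2 hxm
    obtain ⟨c, hc, hxc⟩ := Finset.mem_sup.1 hxr
    obtain ⟨hcp, hcs⟩ := Finset.mem_filter.1 hc
    have hcb : c ≠ b := by
      rintro rfl
      exact hbn hcs
    exact (Finset.disjoint_left.1 (π.disjoint hcp hbp hcb)) hxc hx
  · exact Finset.mem_range.1 (π.le hbp hx)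

lemma m_le_n (hS : ∃ S ⊆ π.parts, S.sup id = Finset.range m) : m ≤ n := by
  have h1 : (lowParts π m).sup id = Finset.range m := low_sup π hS
  have h2 : (lowParts π m).sup id ≤ π.parts.sup id :=
    Finset.sup_mono (Finset.filter_subset _ _)
  rw [h1, π.sup_parts] at h2
  by_contra h
  push_neg at h
  exact absurd (h2 (Finset.mem_range.2 h)) (by simp)

lemma high_cover (hS : ∃ S ⊆ π.parts, S.sup id = Finset.range m) {x : ℕ}
    (h1 : m ≤ x) (h2 : x < n) : ∃ b ∈ highParts π m, x ∈ b := by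
  have : x ∈ π.parts.sup id := by rw [π.sup_parts]; exact Finset.mem_range.2 h2
  obtain ⟨b, hb, hxb⟩ := Finset.mem_sup.1 this
  refine ⟨b, Finset.mem_filter.2 ⟨hb, ?_⟩, hxb⟩
  intro hsub
  have := Finset.mem_range.1 (hsub hxb)
  omega

/-- The partition of `range m` by the lower parts. -/
def splitLow (h : (π.parts.filter (· ⊆ Finset.range m)).sup id = Finset.range m) :
    Finpartition (Finset.range m) :=
  π.ofSubset (Finset.filter_subset _ _) h

lemma splitLow_parts (h) : (splitLow π (m := m) h).parts = lowParts π m := rfl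

/-- The partition of `range (n - m)` by the shifted upper parts. -/
def splitHigh (hS : ∃ S ⊆ π.parts, S.sup id = Finset.range m) :
    Finpartition (Finset.range (n - m)) where
  parts := (highParts π m).image (shDn m)
  supIndep := by
    rw [Finset.supIndep_iff_pairwiseDisjoint]
    intro a ha b hb hab
    simp only [Function.onFun, id_eq]
    simp only [Finset.coe_image, Set.mem_image, Finset.mem_coe] at ha hb
    obtain ⟨c, hc, rfl⟩ := ha
    obtain ⟨d, hd, rfl⟩ := hb
    have hcd : c ≠ d := fun h => hab (by rw [h])
    have hdisj : Disjoint c d :=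
      π.disjoint (Finset.mem_filter.1 hc).1 (Finset.mem_filter.1 hd).1 hcd
    rw [Finset.disjoint_left]
    intro x hxa hxb
    obtain ⟨y, hy, rfl⟩ := mem_shDn.1 hxa
    obtain ⟨z, hz, hzy⟩ := mem_shDn.1 hxb
    have hy' := high_disjoint π hS hc y hy
    have hz' := high_disjoint π hS hd z hz
    have : z = y := by omega
    subst this
    exact (Finset.disjoint_left.1 hdisj) hy hz
  sup_parts := by
    ext x
    simp only [Finset.mem_sup, Finset.mem_image, Finset.mem_range, id]
    constructor
    · rintro ⟨b, ⟨c, hc, rfl⟩, hx⟩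
      obtain ⟨y, hy, rfl⟩ := mem_shDn.1 hx
      have := high_disjoint π hS hc y hy
      omega
    · intro hx
      have hmn : m ≤ n := m_le_n π hS
      obtain ⟨b, hb, hxb⟩ := high_cover π hS (x := x + m) (by omega) (by omega)
      exact ⟨shDn m b, ⟨b, hb, rfl⟩, mem_shDn.2 ⟨x + m, hxb, by omega⟩⟩
  bot_notMem := by
    rw [Finset.mem_image]
    rintro ⟨c, hc, hce⟩
    have : c.Nonempty := π.nonempty_of_mem_parts (Finset.mem_filter.1 hc).1
    have := shDn_nonempty (m := m) this
    rw [hce] at this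
    simp [Finset.bot_eq_empty] at this

lemma splitHigh_parts (hS) :
    (splitHigh π (m := m) hS).parts = (highParts π m).image (shDn m) := rfl

/-- The set of `k` such that an initial segment `range k` is a union of blocks. -/
def pset : Set ℕ := {k | 0 < k ∧ ∃ S ⊆ π.parts, S.sup id = Finset.range k}

/-- The first index at which `π` splits. -/
noncomputable def firstIdx : ℕ := sInf (pset π)

lemma n_mem_pset (hn : 1 ≤ n) : n ∈ pset π :=
  ⟨hn, π.parts, Finset.Subset.refl _, π.sup_parts⟩

lemma firstIdx_mem (hn : 1 ≤ n) : firstIdx π ∈ pset π :=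
  Nat.sInf_mem ⟨n, n_mem_pset π hn⟩

lemma firstIdx_le (hn : 1 ≤ n) : firstIdx π ≤ n :=
  Nat.sInf_le (n_mem_pset π hn)

lemma firstIdx_pos (hn : 1 ≤ n) : 0 < firstIdx π := (firstIdx_mem π hn).1

lemma splitLow_atomic (hn : 1 ≤ n) (h) :
    IsAtomicPartition (splitLow π (m := firstIdx π) h) := by
  rintro ⟨k, hk0, hkm, S, hSsub, hSsup⟩
  have : k ∈ pset π := ⟨hk0, S, hSsub.trans (Finset.filter_subset _ _), hSsup⟩
  have h2 : firstIdx π ≤ k := Nat.sInf_le this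
  omega

variable {σ : Finpartition (Finset.range m)} {τ : Finpartition (Finset.range (n - m))}

lemma glue_lowParts (hmn : m ≤ n) :
    lowParts (glue hmn σ τ) m = σ.parts := by
  ext b
  simp only [lowParts, Finset.mem_filter, glue_parts, Finset.mem_union]
  constructor
  · rintro ⟨hb | hb, hbs⟩
    · exact hb
    · exfalso
      obtain ⟨c, hc, rfl⟩ := Finset.mem_image.1 hb
      obtain ⟨y, hy⟩ := τ.nonempty_of_mem_parts hc
      have : y + m ∈ shUp m c := mem_shUp.2 ⟨y, hy, rfl⟩
      have := Finset.mem_range.1 (hbs this)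
      omega
  · intro hb
    exact ⟨Or.inl hb, fun x hx => σ.le hb hx⟩

lemma glue_highParts (hmn : m ≤ n) (hm : 0 < m) :
    highParts (glue hmn σ τ) m = τ.parts.image (shUp m) := by
  ext b
  simp only [highParts, Finset.mem_filter, glue_parts, Finset.mem_union]
  constructor
  · rintro ⟨hb | hb, hbs⟩
    · exact absurd (fun x hx => σ.le hb hx) hbs
    · exact hb
  · intro hb
    refine ⟨Or.inr hb, ?_⟩
    obtain ⟨c, hc, rfl⟩ := Finset.mem_image.1 hb
    obtain ⟨y, hy⟩ := τ.nonempty_of_mem_parts hc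
    intro hsub
    have : y + m ∈ shUp m c := mem_shUp.2 ⟨y, hy, rfl⟩
    have := Finset.mem_range.1 (hsub this)
    omega

lemma pset_mem_glue (hmn : m ≤ n) (hm : 0 < m) : m ∈ pset (glue hmn σ τ) := by
  refine ⟨hm, σ.parts, ?_, σ.sup_parts⟩
  rw [glue_parts]
  exact Finset.subset_union_left

lemma firstIdx_glue (hmn : m ≤ n) (hm : 0 < m) (hσ : IsAtomicPartition σ) :
    firstIdx (glue hmn σ τ) = m := by
  have hmem := pset_mem_glue (σ := σ) (τ := τ) hmn hm
  have hle : firstIdx (glue hmn σ τ) ≤ m := Nat.sInf_le hmem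
  rcases lt_or_eq_of_le hle with hlt | heq
  · exfalso
    obtain ⟨hk0, S, hSsub, hSsup⟩ := firstIdx_mem (glue hmn σ τ) (by omega)
    set k := firstIdx (glue hmn σ τ) with hk
    have hSσ : S ⊆ σ.parts := by
      intro b hb
      rcases Finset.mem_union.1 ((glue_parts hmn σ τ) ▸ hSsub hb) with h | h
      · exact h
      · exfalso
        obtain ⟨c, hc, rfl⟩ := Finset.mem_image.1 h
        obtain ⟨y, hy⟩ := τ.nonempty_of_mem_parts hc
        have h1 : y + m ∈ shUp m c := mem_shUp.2 ⟨y, hy, rfl⟩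
        have h2 : y + m ∈ S.sup id := Finset.mem_sup.2 ⟨_, hb, h1⟩
        rw [hSsup] at h2
        have := Finset.mem_range.1 h2
        omega
    exact hσ ⟨k, hk0, hlt, S, hSσ, hSsup⟩
  · exact heq

lemma splitLow_glue (hmn : m ≤ n) (h) :
    splitLow (glue hmn σ τ) (m := m) h = σ := by
  apply Finpartition.ext
  rw [splitLow_parts]
  exact glue_lowParts hmn

lemma splitHigh_glue (hmn : m ≤ n) (hm : 0 < m) (hS) :
    splitHigh (glue hmn σ τ) (m := m) hS = τ := by
  apply Finpartition.ext
  rw [splitHigh_parts, glue_highParts hmn hm, Finset.image_image]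
  have : ∀ c ∈ τ.parts, (shDn m ∘ shUp m) c = id c := fun c _ => shDn_shUp
  rw [Finset.image_congr this, Finset.image_id]

lemma glue_split (hS : ∃ S ⊆ π.parts, S.sup id = Finset.range m) (h) :
    glue (m_le_n π hS) (splitLow π (m := m) h) (splitHigh π hS) = π := by
  apply Finpartition.ext
  rw [glue_parts, splitLow_parts, splitHigh_parts, Finset.image_image]
  have : ∀ b ∈ highParts π m, (shUp m ∘ shDn m) b = id b := by
    intro b hb
    exact shUp_shDn (fun x hx => (high_disjoint π hS hb x hx).1)
  rw [Finset.image_congr this, Finset.image_id]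
  rw [lowParts, highParts, Finset.filter_union_filter_not_eq]

lemma prod_split (hS : ∃ S ⊆ π.parts, S.sup id = Finset.range m) (h) :
    (∏ β ∈ π.parts, (X β.card : MvPolynomial ℕ ℚ)) =
      (∏ β ∈ (splitLow π (m := m) h).parts, X β.card) *
        ∏ β ∈ (splitHigh π hS).parts, X β.card := by
  rw [splitLow_parts, splitHigh_parts]
  have hinj : ∀ b ∈ highParts π m, ∀ c ∈ highParts π m, shDn m b = shDn m c → b = c := by
    intro b hb c hc hbc
    have h1 := shUp_shDn (fun x hx => (high_disjoint π hS hb x hx).1)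
    have h2 := shUp_shDn (fun x hx => (high_disjoint π hS hc x hx).1)
    rw [← h1, ← h2, hbc]
  rw [Finset.prod_image hinj]
  have hcard : ∀ b ∈ highParts π m, ((X (shDn m b).card : MvPolynomial ℕ ℚ)) = X b.card := by
    intro b hb
    rw [card_shDn (fun x hx => (high_disjoint π hS hb x hx).1)]
  rw [Finset.prod_congr rfl hcard, lowParts, highParts,
    ← Finset.prod_union (Finset.disjoint_filter_filter_not _ _ _),
    Finset.filter_union_filter_not_eq]

lemma hS_of_firstIdx (hn : 1 ≤ n) (h : firstIdx π = m) :
    ∃ S ⊆ π.parts, S.sup id = Finset.range m := by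
  have := firstIdx_mem π hn
  rw [h] at this
  exact this.2

lemma inner_sum (hn : 1 ≤ n) (hm1 : 1 ≤ m) (hmn : m ≤ n)
    [DecidablePred (fun π : Finpartition (Finset.range m) => IsAtomicPartition π)] :
    ∑ π ∈ Finset.univ.filter (fun π : Finpartition (Finset.range n) => firstIdx π = m),
        ∏ β ∈ π.parts, (X β.card : MvPolynomial ℕ ℚ)
      = (∑ σ ∈ Finset.univ.filter (fun σ : Finpartition (Finset.range m) =>
          IsAtomicPartition σ), ∏ β ∈ σ.parts, X β.card) * bellY (n - m) := by
  rw [bellY, Finset.sum_mul_sum]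
  rw [← Finset.sum_product' (s := Finset.univ.filter _) (t := Finset.univ)]
  refine Finset.sum_bij'
    (i := fun π hπ =>
      (splitLow π (low_sup π (hS_of_firstIdx π hn (Finset.mem_filter.1 hπ).2)),
       splitHigh π (hS_of_firstIdx π hn (Finset.mem_filter.1 hπ).2)))
    (j := fun p _ => glue hmn p.1 p.2) ?_ ?_ ?_ ?_ ?_
  · intro π hπ
    have hfi : firstIdx π = m := (Finset.mem_filter.1 hπ).2
    rw [Finset.mem_product]
    refine ⟨Finset.mem_filter.2 ⟨Finset.mem_univ _, ?_⟩, Finset.mem_univ _⟩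
    subst hfi
    exact splitLow_atomic π hn _
  · intro p hp
    refine Finset.mem_filter.2 ⟨Finset.mem_univ _, ?_⟩
    have hatom : IsAtomicPartition p.1 :=
      (Finset.mem_filter.1 (Finset.mem_product.1 hp).1).2
    exact firstIdx_glue hmn (by omega) hatom
  · intro π hπ
    exact glue_split π (hS_of_firstIdx π hn (Finset.mem_filter.1 hπ).2) _
  · intro p hp
    exact Prod.ext (splitLow_glue (σ := p.1) (τ := p.2) hmn _)
      (splitHigh_glue (σ := p.1) (τ := p.2) hmn (by omega)
        (pset_mem_glue hmn (by omega)).2)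
  · intro π hπ
    exact prod_split π (hS_of_firstIdx π hn (Finset.mem_filter.1 hπ).2) _

lemma atomicY_eq (m : ℕ)
    [DecidablePred (fun π : Finpartition (Finset.range m) => IsAtomicPartition π)] :
    atomicY m = ∑ σ ∈ Finset.univ.filter
      (fun σ : Finpartition (Finset.range m) => IsAtomicPartition σ),
        ∏ β ∈ σ.parts, X β.card := by
  rw [atomicY, finsum_eq_sum_of_fintype]
  refine Finset.sum_bij' (i := fun π _ => π.val)
    (j := fun σ hσ => ⟨σ, (Finset.mem_filter.1 hσ).2⟩) ?_ ?_ ?_ ?_ ?_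
  · intro π _
    exact Finset.mem_filter.2 ⟨Finset.mem_univ _, π.2⟩
  · intro σ _
    exact Finset.mem_univ _
  · intro π _
    rfl
  · intro σ _
    rfl
  · intro π _
    rfl

lemma bellY_zero : bellY 0 = 1 := by
  have hparts : ∀ π : Finpartition (Finset.range 0), π.parts = ∅ := by
    intro π
    rw [Finset.eq_empty_iff_forall_notMem]
    intro b hb
    have h1 : b ≤ Finset.range 0 := π.le hb
    have h2 : b = ∅ := by simpa using h1
    refine π.bot_notMem ?_
    rw [Finset.bot_eq_empty, ← h2]
    exact hb
  haveI : Subsingleton (Finpartition (Finset.range 0)) :=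
    ⟨fun a b => Finpartition.ext (by rw [hparts a, hparts b])⟩
  haveI : Nonempty (Finpartition (Finset.range 0)) :=
    ⟨(Finpartition.empty (Finset ℕ)).copy (by simp)⟩
  rw [bellY]
  rw [Finset.sum_congr rfl (fun π _ => by rw [hparts π, Finset.prod_empty])]
  rw [Finset.sum_const, Finset.card_univ]
  have : Fintype.card (Finpartition (Finset.range 0)) = 1 :=
    le_antisymm (Fintype.card_le_one_iff_subsingleton.2 inferInstance) Fintype.card_pos
  rw [this, one_smul]

lemma main_conv (n : ℕ) (hn : 1 ≤ n) :
    bellY n = ∑ m ∈ Finset.Icc 1 n, atomicY m * bellY (n - m) := by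
  classical
  rw [bellY]
  rw [← Finset.sum_fiberwise_of_maps_to (g := fun π => firstIdx π) (t := Finset.Icc 1 n)
    (fun π _ => Finset.mem_Icc.2 ⟨firstIdx_pos π hn, firstIdx_le π hn⟩)]
  refine Finset.sum_congr rfl ?_
  intro m hm
  obtain ⟨hm1, hmn⟩ := Finset.mem_Icc.1 hm
  rw [atomicY_eq m, inner_sum hn hm1 hmn]

lemma main_ps :
    (PowerSeries.mk fun n => bellY n) *
        (1 - PowerSeries.mk fun m => if m = 0 then 0 else atomicY m) = 1 := by
  refine PowerSeries.ext fun n => ?_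
  rw [mul_sub, mul_one, map_sub, PowerSeries.coeff_mul]
  simp only [PowerSeries.coeff_mk]
  rcases Nat.eq_zero_or_pos n with rfl | hn
  · simp [bellY_zero]
  · rw [Finset.Nat.sum_antidiagonal_eq_sum_range_succ_mk, Finset.sum_range_succ]
    simp only [Nat.sub_self, if_pos rfl, mul_zero, add_zero]
    have hstep : ∀ k ∈ Finset.range n,
        bellY k * (if n - k = 0 then (0 : MvPolynomial ℕ ℚ) else atomicY (n - k))
          = bellY k * atomicY (n - k) := by
      intro k hk
      have := Finset.mem_range.1 hk
      rw [if_neg (by omega)]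
    rw [Finset.sum_congr rfl hstep]
    have hre : ∑ k ∈ Finset.range n, bellY k * atomicY (n - k)
        = ∑ m ∈ Finset.Icc 1 n, atomicY m * bellY (n - m) := by
      refine Finset.sum_nbij' (i := fun k => n - k) (j := fun m => n - m) ?_ ?_ ?_ ?_ ?_
      · intro k hk; have := Finset.mem_range.1 hk
        exact Finset.mem_Icc.2 ⟨by omega, by omega⟩
      · intro m hm; have := Finset.mem_Icc.1 hm
        exact Finset.mem_range.2 (by omega)
      · intro k hk; have := Finset.mem_range.1 hk; omega
      · intro m hm; have := Finset.mem_Icc.1 hm; omega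
      · intro k hk
        have := Finset.mem_range.1 hk
        rw [mul_comm, Nat.sub_sub_self (by omega : k ≤ n)]
    rw [hre, ← main_conv n hn]
    have hn0 : n ≠ 0 := by omega
    simp [PowerSeries.coeff_one, hn0]

end BellAux

/-- For every `n ≥ 1`, `Y_n = Σ_{m=1}^{n} Ỹ_m · Y_{n−m}`; equivalently, the ordinary
generating functions `Ỹ = Σ_{m≥1} Ỹ_m tᵐ` and `Y = Σ_{n≥0} Y_n tⁿ` satisfy
`Ỹ = 1 − 1/Y`, i.e. `Y·(1 − Ỹ) = 1`. -/
theorem atomicY_convolution :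
    (∀ n : ℕ, 1 ≤ n → bellY n = ∑ m ∈ Finset.Icc 1 n, atomicY m * bellY (n - m)) ∧
    (PowerSeries.mk fun n => bellY n) *
        (1 - PowerSeries.mk fun m => if m = 0 then 0 else atomicY m) = 1 := by
  exact ⟨BellAux.main_conv, BellAux.main_ps⟩
end

section
/- Let (R, D) be a commutative ring with a derivation D and let u ∈ R. Define f_0 = u, f_{n+1} = D(f_n) + Σ_{s=0}^{n−1} f_s·f_{n−1−s}, and define g_0 = u and, for n ≥ 1, g_{2n} = f_{2n} + 2·Σ_{s=0}^{n−1} g_{2s}·f_{2n−2−2s}. Then for every n ≥ 0: D(g_{2n+2}) = D^3(g_{2n}) + 4u·D(g_{2n}) + 2·D(u)·g_{2n}. -/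
open Finset
open PowerSeries

section KdVAux

variable {R : Type*} [CommRing R]

/-- Coefficientwise application of a derivation to a power series. -/
noncomputable def kdvδ (D : Derivation ℤ R R) (φ : R⟦X⟧) : R⟦X⟧ :=
  PowerSeries.mk fun n => D (PowerSeries.coeff n φ)

variable (D : Derivation ℤ R R)

@[simp] lemma coeff_kdvδ (n : ℕ) (φ : R⟦X⟧) :
    PowerSeries.coeff n (kdvδ D φ) = D (PowerSeries.coeff n φ) :=
  PowerSeries.coeff_mk _ _

lemma kdvδ_add (φ ψ : R⟦X⟧) : kdvδ D (φ + ψ) = kdvδ D φ + kdvδ D ψ := by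
  ext n; simp

lemma kdvδ_sub (φ ψ : R⟦X⟧) : kdvδ D (φ - ψ) = kdvδ D φ - kdvδ D ψ := by
  ext n; simp

lemma kdvδ_mul (φ ψ : R⟦X⟧) : kdvδ D (φ * ψ) = kdvδ D φ * ψ + φ * kdvδ D ψ := by
  ext n
  simp only [coeff_kdvδ, PowerSeries.coeff_mul, map_add, map_sum]
  rw [← Finset.sum_add_distrib]
  refine Finset.sum_congr rfl fun p _ => ?_
  rw [Derivation.leibniz, smul_eq_mul, smul_eq_mul]
  ring

lemma kdvδ_one : kdvδ D (1 : R⟦X⟧) = 0 := by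
  ext n
  simp only [coeff_kdvδ, PowerSeries.coeff_one, map_zero]
  split <;> simp

lemma kdvδ_two (φ : R⟦X⟧) : kdvδ D (2 * φ) = 2 * kdvδ D φ := by
  rw [two_mul, kdvδ_add, two_mul]

lemma kdvδ_C (r : R) : kdvδ D (PowerSeries.C r) = PowerSeries.C (D r) := by
  ext n
  simp only [coeff_kdvδ, PowerSeries.coeff_C]
  split <;> simp

lemma kdvδ_X_pow_mul (k : ℕ) (φ : R⟦X⟧) :
    kdvδ D ((X : R⟦X⟧) ^ k * φ) = (X : R⟦X⟧) ^ k * kdvδ D φ := by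
  ext n
  rw [coeff_kdvδ, PowerSeries.coeff_X_pow_mul', PowerSeries.coeff_X_pow_mul']
  split
  · rw [coeff_kdvδ]
  · exact map_zero _

lemma kdvδ_X_mul (φ : R⟦X⟧) : kdvδ D ((X : R⟦X⟧) * φ) = (X : R⟦X⟧) * kdvδ D φ := by
  simpa using kdvδ_X_pow_mul D 1 φ

lemma kdv_sum_even_mask {M : Type*} [AddCommMonoid M] (t : ℕ → M)
    (ht : ∀ i, ¬ Even i → t i = 0) (m : ℕ) :
    ∑ i ∈ range (2 * m), t i = ∑ s ∈ range m, t (2 * s) := by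
  induction m with
  | zero => simp
  | succ k ih =>
    have h1 : 2 * (k + 1) = (2 * k + 1) + 1 := by ring
    rw [h1, sum_range_succ, sum_range_succ, sum_range_succ, ih,
      ht (2 * k + 1) (by simp [Nat.even_add_one, parity_simps]), add_zero]

lemma kdv_half_sum (f : ℕ → R) (m : ℕ) (hm : ¬ Even m) :
    ∑ p ∈ antidiagonal m, f p.1 * f p.2
      = 2 * ∑ p ∈ antidiagonal m, (if Even p.1 then f p.1 * f p.2 else 0) := by
  rw [two_mul]
  nth_rewrite 3 [← Finset.Nat.sum_antidiagonal_swap]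
  rw [← Finset.sum_add_distrib]
  refine Finset.sum_congr rfl fun p hp => ?_
  have hpm : p.1 + p.2 = m := Finset.HasAntidiagonal.mem_antidiagonal.mp hp
  have hpar : ¬ (Even p.1 ↔ Even p.2) := by
    intro h; exact hm (hpm ▸ (Nat.even_add.mpr h))
  by_cases h1 : Even p.1
  · have h2 : ¬ Even p.2 := fun h => hpar ⟨fun _ => h, fun _ => h1⟩
    simp only [Prod.fst_swap, Prod.snd_swap, if_pos h1, if_neg h2, add_zero]
  · have h2 : Even p.2 := by
      by_contra h2
      exact hpar ⟨fun h => absurd h h1, fun h => absurd h h2⟩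
    simp only [Prod.fst_swap, Prod.snd_swap, if_neg h1, if_pos h2, zero_add]
    ring

noncomputable def maskE (f : ℕ → R) : R⟦X⟧ := PowerSeries.mk fun n => if Even n then f n else 0
noncomputable def maskO (f : ℕ → R) : R⟦X⟧ := PowerSeries.mk fun n => if Even n then 0 else f n

@[simp] lemma coeff_maskE (f : ℕ → R) (n : ℕ) :
    PowerSeries.coeff n (maskE f) = if Even n then f n else 0 := PowerSeries.coeff_mk _ _
@[simp] lemma coeff_maskO (f : ℕ → R) (n : ℕ) :
    PowerSeries.coeff n (maskO f) = if Even n then 0 else f n := PowerSeries.coeff_mk _ _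

lemma coeff_two_mul' (n : ℕ) (φ : R⟦X⟧) :
    PowerSeries.coeff n (2 * φ) = 2 * PowerSeries.coeff n φ := by
  rw [show (2 : R⟦X⟧) = PowerSeries.C 2 by rw [map_ofNat], PowerSeries.coeff_C_mul]

lemma kdv_par_even {a b m : ℕ} (h : a + b = m) (hm : Even m) : Even a ↔ Even b :=
  Nat.even_add.mp (h ▸ hm)

lemma kdv_par_odd {a b m : ℕ} (h : a + b = m) (hm : ¬ Even m) : Even a ↔ ¬ Even b := by
  have := fun hh => hm (h ▸ Nat.even_add.mpr hh)
  tauto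

lemma kdv_hrange (f : ℕ → R) (m : ℕ) : ∑ s ∈ range (m+1), f s * f (m + 1 - 1 - s)
    = ∑ p ∈ antidiagonal m, f p.1 * f p.2 := by
  rw [Finset.Nat.sum_antidiagonal_eq_sum_range_succ (fun i j => f i * f j) m]
  simp

lemma kdv_hbeta (u : R) (f : ℕ → R) (hf0 : f 0 = u)
    (hf : ∀ n : ℕ, f (n + 1) = D (f n) + ∑ s ∈ Finset.range n, f s * f (n - 1 - s)) :
    X * kdvδ D (maskO f)
      = maskE f - PowerSeries.C u - X^2*(maskE f * maskE f) - X^2*(maskO f * maskO f) := by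
  ext n
  rcases n with _ | n
  · rw [PowerSeries.coeff_zero_X_mul]
    simp only [map_sub, coeff_maskE, PowerSeries.coeff_C, PowerSeries.coeff_X_pow_mul']
    norm_num [hf0]
  rw [PowerSeries.coeff_succ_X_mul, coeff_kdvδ]
  simp only [map_sub, PowerSeries.coeff_C, PowerSeries.coeff_X_pow_mul', coeff_maskE, coeff_maskO]
  rcases n with _ | m
  · norm_num
  have h2le : 2 ≤ m + 1 + 1 := by omega
  have hsubm : m + 1 + 1 - 2 = m := by omega
  simp only [if_pos h2le, hsubm, if_neg (by omega : ¬ (m + 1 + 1 = 0))]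
  by_cases he : Even (m + 1)
  · have hmm : ¬ Even m := by simpa [Nat.even_add_one] using he
    have he2 : ¬ Even (m + 1 + 1) := by simpa [Nat.even_add_one] using he
    rw [if_pos he, if_neg he2]
    have hAA : PowerSeries.coeff m (maskE f * maskE f) = 0 := by
      rw [PowerSeries.coeff_mul]
      refine Finset.sum_eq_zero fun p hp => ?_
      have hpm := Finset.HasAntidiagonal.mem_antidiagonal.mp hp
      simp only [coeff_maskE]
      by_cases h1 : Even p.1
      · rw [if_neg (((kdv_par_odd hpm hmm).mp h1)), mul_zero]
      · rw [if_neg h1, zero_mul]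
    have hBB : PowerSeries.coeff m (maskO f * maskO f) = 0 := by
      rw [PowerSeries.coeff_mul]
      refine Finset.sum_eq_zero fun p hp => ?_
      have hpm := Finset.HasAntidiagonal.mem_antidiagonal.mp hp
      simp only [coeff_maskO]
      by_cases h1 : Even p.1
      · rw [if_pos h1, zero_mul]
      · rw [if_pos (by have := (kdv_par_odd hpm hmm); tauto : Even p.2), mul_zero]
    rw [hAA, hBB]
    simp
  · have hmm : Even m := by
      rcases Nat.even_or_odd m with h | h
      · exact h
      · exact absurd (Nat.even_add_one.mpr (Nat.not_even_iff_odd.mpr h)) he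
    have he2 : Even (m + 1 + 1) := Nat.even_add_one.mpr he
    rw [if_neg he, if_pos he2]
    have key : PowerSeries.coeff m (maskE f * maskE f)
        + PowerSeries.coeff m (maskO f * maskO f)
        = ∑ p ∈ antidiagonal m, f p.1 * f p.2 := by
      rw [PowerSeries.coeff_mul, PowerSeries.coeff_mul, ← Finset.sum_add_distrib]
      refine Finset.sum_congr rfl fun p hp => ?_
      have hpm := Finset.HasAntidiagonal.mem_antidiagonal.mp hp
      simp only [coeff_maskE, coeff_maskO]
      by_cases h1 : Even p.1
      · rw [if_pos h1, if_pos ((kdv_par_even hpm hmm).mp h1), if_pos h1,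
          if_pos ((kdv_par_even hpm hmm).mp h1)]
        ring
      · rw [if_neg h1, if_neg (fun h2 => h1 ((kdv_par_even hpm hmm).mpr h2)), if_neg h1,
          if_neg (fun h2 => h1 ((kdv_par_even hpm hmm).mpr h2))]
        ring
    have hfm := hf (m + 1)
    rw [kdv_hrange f m] at hfm
    linear_combination key - hfm

lemma kdv_halpha (u : R) (f : ℕ → R)
    (hf : ∀ n : ℕ, f (n + 1) = D (f n) + ∑ s ∈ Finset.range n, f s * f (n - 1 - s)) :
    X * kdvδ D (maskE f) = maskO f - 2*(X^2*(maskE f * maskO f)) := by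
  ext n
  rcases n with _ | n
  · rw [PowerSeries.coeff_zero_X_mul]
    simp only [map_sub, coeff_maskO, coeff_two_mul', PowerSeries.coeff_X_pow_mul']
    norm_num
  rw [PowerSeries.coeff_succ_X_mul, coeff_kdvδ]
  simp only [map_sub, PowerSeries.coeff_X_pow_mul', coeff_maskE, coeff_maskO, coeff_two_mul']
  rcases n with _ | m
  · norm_num
    rw [hf 0]
    simp
  have h2le : 2 ≤ m + 1 + 1 := by omega
  have hsubm : m + 1 + 1 - 2 = m := by omega
  simp only [if_pos h2le, hsubm]
  by_cases he : Even (m + 1)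
  · -- working case, m odd
    have hmm : ¬ Even m := by simpa [Nat.even_add_one] using he
    have he2 : ¬ Even (m + 1 + 1) := by simpa [Nat.even_add_one] using he
    rw [if_pos he, if_neg he2]
    have hEO : PowerSeries.coeff m (maskE f * maskO f)
        = ∑ p ∈ antidiagonal m, (if Even p.1 then f p.1 * f p.2 else 0) := by
      rw [PowerSeries.coeff_mul]
      refine Finset.sum_congr rfl fun p hp => ?_
      have hpm := Finset.HasAntidiagonal.mem_antidiagonal.mp hp
      simp only [coeff_maskE, coeff_maskO]
      by_cases h1 : Even p.1
      · rw [if_pos h1, if_pos h1, if_neg ((kdv_par_odd hpm hmm).mp h1)]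
      · rw [if_neg h1, if_neg h1, zero_mul]
    have hfm := hf (m + 1)
    rw [kdv_hrange f m, kdv_half_sum f m hmm] at hfm
    rw [hEO]
    linear_combination - hfm
  · -- vanishing case, m even
    have hmm : Even m := by
      rcases Nat.even_or_odd m with h | h
      · exact h
      · exact absurd (Nat.even_add_one.mpr (Nat.not_even_iff_odd.mpr h)) he
    have he2 : Even (m + 1 + 1) := Nat.even_add_one.mpr he
    rw [if_neg he, if_pos he2]
    have hEO : PowerSeries.coeff m (maskE f * maskO f) = 0 := by
      rw [PowerSeries.coeff_mul]
      refine Finset.sum_eq_zero fun p hp => ?_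
      have hpm := Finset.HasAntidiagonal.mem_antidiagonal.mp hp
      simp only [coeff_maskE, coeff_maskO]
      by_cases h1 : Even p.1
      · rw [if_pos ((kdv_par_even hpm hmm).mp h1), mul_zero]
      · rw [if_neg h1, zero_mul]
    rw [hEO]
    simp

lemma kdv_hG (u : R) (f g : ℕ → R) (hf0 : f 0 = u) (hg0 : g 0 = u)
    (hg : ∀ n : ℕ, 1 ≤ n →
      g (2 * n) = f (2 * n) + 2 * ∑ s ∈ Finset.range n, g (2 * s) * f (2 * n - 2 - 2 * s)) :
    maskE g = maskE f + 2*(X^2*(maskE g * maskE f)) := by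
  ext n
  simp only [map_add, coeff_maskE, coeff_two_mul', PowerSeries.coeff_X_pow_mul']
  rcases n with _ | n
  · norm_num [hf0, hg0]
  rcases n with _ | m
  · norm_num
  have h2le : 2 ≤ m + 1 + 1 := by omega
  have hsubm : m + 1 + 1 - 2 = m := by omega
  simp only [if_pos h2le, hsubm]
  by_cases hmm : Even m
  · have he2 : Even (m + 1 + 1) := by
      rcases hmm with ⟨k, hk⟩; exact ⟨k + 1, by omega⟩
    rw [if_pos he2, if_pos he2]
    obtain ⟨k, hk⟩ := hmm
    set t : ℕ → R := fun i => if Even i then g i * f (m - i) else 0 with ht_def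
    have hS1 : PowerSeries.coeff m (maskE g * maskE f)
        = ∑ p ∈ antidiagonal m, (if Even p.1 then g p.1 * f p.2 else 0) := by
      rw [PowerSeries.coeff_mul]
      refine Finset.sum_congr rfl fun p hp => ?_
      have hpm := Finset.HasAntidiagonal.mem_antidiagonal.mp hp
      simp only [coeff_maskE]
      by_cases h1 : Even p.1
      · rw [if_pos h1, if_pos h1, if_pos ((kdv_par_even hpm ⟨k, hk⟩).mp h1)]
      · rw [if_neg h1, if_neg h1, zero_mul]
    have hS2 : ∑ p ∈ antidiagonal m, (if Even p.1 then g p.1 * f p.2 else 0)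
        = ∑ i ∈ range (m + 1), t i := by
      rw [Finset.Nat.sum_antidiagonal_eq_sum_range_succ
        (fun i j => if Even i then g i * f j else 0) m]
    have ht0 : ∀ i, ¬ Even i → t i = 0 := fun i h => if_neg h
    have hEm : Even m := ⟨k, hk⟩
    have hS3 : ∑ i ∈ range (2 * (k + 1)), t i = ∑ i ∈ range (m + 1), t i := by
      have h1 : 2 * (k + 1) = (m + 1) + 1 := by omega
      rw [h1, Finset.sum_range_succ,
        ht0 (m + 1) (by simp [Nat.even_add_one, hEm] : ¬ Even (m+1)), add_zero]
    have hS4 := kdv_sum_even_mask t ht0 (k + 1)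
    have hS5 : ∑ s ∈ range (k + 1), t (2 * s)
        = ∑ s ∈ range (k + 1), g (2 * s) * f (m + 1 + 1 - 2 - 2 * s) := by
      refine Finset.sum_congr rfl fun s _ => ?_
      have hev : Even (2 * s) := ⟨s, two_mul s⟩
      simp only [ht_def, hev, if_true]
      rw [show m - 2 * s = m + 1 + 1 - 2 - 2 * s from by omega]
    have hgk := hg (k + 1) (by omega)
    have hidx : 2 * (k + 1) = m + 1 + 1 := by omega
    rw [hidx] at hgk
    rw [hS1, hS2, ← hS3, hS4, hS5]
    linear_combination hgk
  · have he2 : ¬ Even (m + 1 + 1) := by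
      intro ⟨k, hk⟩; exact hmm ⟨k - 1, by omega⟩
    rw [if_neg he2, if_neg he2]
    have hS : PowerSeries.coeff m (maskE g * maskE f) = 0 := by
      rw [PowerSeries.coeff_mul]
      refine Finset.sum_eq_zero fun p hp => ?_
      have hpm := Finset.HasAntidiagonal.mem_antidiagonal.mp hp
      simp only [coeff_maskE]
      by_cases h1 : Even p.1
      · rw [if_neg ((kdv_par_odd hpm hmm).mp h1), mul_zero]
      · rw [if_neg h1, zero_mul]
    rw [hS]
    ring

end KdVAux



/-- Let `(R, D)` be a commutative ring with a derivation `D` and `u ∈ R`.  Define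
`f_0 = u`, `f_{n+1} = D(f_n) + Σ_{s=0}^{n−1} f_s·f_{n−1−s}` (the coefficients of the
formal solution of the Riccati equation `D(f) + f² = z²/4 − u`), and `g_0 = u`,
`g_{2n} = f_{2n} + 2·Σ_{s=0}^{n−1} g_{2s}·f_{2n−2−2s}` for `n ≥ 1`.  Then the KdV
recursion `D(g_{2n+2}) = D³(g_{2n}) + 4u·D(g_{2n}) + 2·D(u)·g_{2n}` holds for every
`n ≥ 0`. -/
theorem kdv_recursion (R : Type*) [CommRing R] (D : Derivation ℤ R R) (u : R)
    (f g : ℕ → R)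
    (hf0 : f 0 = u)
    (hf : ∀ n : ℕ, f (n + 1) = D (f n) + ∑ s ∈ Finset.range n, f s * f (n - 1 - s))
    (hg0 : g 0 = u)
    (hg : ∀ n : ℕ, 1 ≤ n →
      g (2 * n) = f (2 * n) + 2 * ∑ s ∈ Finset.range n, g (2 * s) * f (2 * n - 2 - 2 * s)) :
    ∀ n : ℕ, D (g (2 * n + 2)) =
      D (D (D (g (2 * n)))) + 4 * u * D (g (2 * n)) + 2 * D u * g (2 * n) := by
  have hα := kdv_halpha D u f hf
  have hβ := kdv_hbeta D u f hf0 hf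
  have hGr := kdv_hG u f g hf0 hg0 hg
  set A : R⟦X⟧ := maskE f with hA
  set B : R⟦X⟧ := maskO f with hB
  set G : R⟦X⟧ := maskE g with hGdef
  -- the inverse relation
  have hH : ((1 : R⟦X⟧) + 2*(X^2*G)) * (1 - 2*(X^2*A)) = 1 := by
    linear_combination (2*(X^2 : R⟦X⟧)) * hGr
  -- first derivative : X δG = B H
  have e1 := congrArg (kdvδ D) hGr
  rw [kdvδ_add, kdvδ_two, kdvδ_X_pow_mul, kdvδ_mul] at e1
  have E1 : (X * kdvδ D G) * (1 - 2*(X^2*A)) = (B - 2*(X^2*(A*B))) * (1 + 2*(X^2*G)) := by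
    linear_combination X * e1 + (1 + 2*(X^2*G)) * hα
  have d1 : X * kdvδ D G = B * (1 + 2*(X^2*G)) := by
    calc X * kdvδ D G
        = (X * kdvδ D G) * ((1 + 2*(X^2*G)) * (1 - 2*(X^2*A))) := by rw [hH, mul_one]
      _ = ((X * kdvδ D G) * (1 - 2*(X^2*A))) * (1 + 2*(X^2*G)) := by ring
      _ = ((B - 2*(X^2*(A*B))) * (1 + 2*(X^2*G))) * (1 + 2*(X^2*G)) := by rw [E1]
      _ = (B * (1 + 2*(X^2*G))) * ((1 + 2*(X^2*G)) * (1 - 2*(X^2*A))) := by ring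
      _ = B * (1 + 2*(X^2*G)) := by rw [hH, mul_one]
  -- second derivative
  have t2 := congrArg (kdvδ D) d1
  rw [kdvδ_X_mul, kdvδ_mul, kdvδ_add, kdvδ_one, kdvδ_two, kdvδ_X_pow_mul] at t2
  have d2 : X^2 * kdvδ D (kdvδ D G)
      = (A - PowerSeries.C u - X^2*(A*A) + X^2*(B*B)) * (1 + 2*(X^2*G)) := by
    linear_combination X * t2 + (1 + 2*(X^2*G)) * hβ + (2*(X^2*B)) * d1
  -- third derivative
  have t3 := congrArg (kdvδ D) d2
  rw [kdvδ_X_pow_mul, kdvδ_mul, kdvδ_add, kdvδ_sub, kdvδ_sub, kdvδ_C, kdvδ_X_pow_mul,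
    kdvδ_X_pow_mul, kdvδ_mul, kdvδ_mul, kdvδ_add, kdvδ_one, kdvδ_two, kdvδ_X_pow_mul] at t3
  have d3 : X^3 * kdvδ D (kdvδ D (kdvδ D G))
      = (B*(1 - 2*(X^2*A))^2
          + 4*(X^2*(B*(A - PowerSeries.C u - X^2*(A*A) - X^2*(B*B))))
          + 4*(X^4*(B*(B*B))) - X * PowerSeries.C (D u)) * (1 + 2*(X^2*G)) := by
    linear_combination X * t3 + ((1 - 2*(X^2*A)) * (1 + 2*(X^2*G))) * hα
      + (2*(X^2*(B*(1 + 2*(X^2*G))))) * hβ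
      + (2*(X^2*(A - PowerSeries.C u - X^2*(A*A) + X^2*(B*B)))) * d1
  -- the KdV identity as a power-series identity, multiplied by X^3
  have TG : X^3 * kdvδ D G
      = X^3 * (PowerSeries.C (D u)
          + X^2*(kdvδ D (kdvδ D (kdvδ D G)) + PowerSeries.C (4*u) * kdvδ D G
              + PowerSeries.C (2*(D u)) * G)) := by
    have h4 : PowerSeries.C (4*u) = 4 * PowerSeries.C u := by rw [map_mul, map_ofNat]
    have h2 : PowerSeries.C (2*(D u)) = 2 * PowerSeries.C (D u) := by rw [map_mul, map_ofNat]
    rw [h4, h2]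
    linear_combination (X^2 - 4*(PowerSeries.C u)*X^4) * d1 - X^2 * d3
  -- extract coefficients
  intro n
  have e := congrArg (PowerSeries.coeff (2*n+2+3)) TG
  rw [show (2*n+2+3) = (2*n+2)+3 from by ring] at e
  rw [PowerSeries.coeff_X_pow_mul, PowerSeries.coeff_X_pow_mul] at e
  rw [map_add, PowerSeries.coeff_C, if_neg (by omega : ¬(2*n+2 = 0)),
    PowerSeries.coeff_X_pow_mul', if_pos (by omega : 2 ≤ 2*n+2),
    show 2*n+2-2 = 2*n from by omega, map_add, map_add,
    PowerSeries.coeff_C_mul, PowerSeries.coeff_C_mul] at e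
  have hEv1 : Even (2*n+2) := ⟨n+1, by ring⟩
  have hEv2 : Even (2*n) := ⟨n, by ring⟩
  simp only [coeff_kdvδ, hGdef, coeff_maskE, hEv1, hEv2, if_true] at e
  linear_combination e
end
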